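/- Wavelet tree access correctness (two-level case, generalizable by induction on $l$): Let $S : \text{Fin } n \to \text{Fin } 2^l$ with $l \ge 1$, let $B$ be the root bitmap defined by $B(j) = $ the most significant bit of $S(j)$ (bit $l-1$), let $S_0$ be the subsequence of $S$ (in order) of symbols with top bit 0 and $S_1$ of those with top bit 1, each with the top bit removed. Then for any position $p$: if $B(p) = 0$ then $S(p) = S_0(\text{rank}_0(B, p))$, and if $B(p) = 1$ then $S(p) = 2^{l-1} + S_1(\text{rank}_1(B, p))$. -/

import Mathlib

lemma key_filter (q : ℕ → Bool) : ∀ (L : List ℕ) (p : ℕ) (a : ℕ), L[p]? = some a → q a = true →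
    (L.filter q)[(L.take p).countP q]? = some a := by
  intro L
  induction L with
  | nil => simp
  | cons b t ih =>
    intro p a hp hq
    cases p with
    | zero =>
      simp at hp; subst hp
      simp [List.filter_cons, hq]
    | succ p =>
      simp only [List.getElem?_cons_succ] at hp
      rw [List.take_succ_cons]
      by_cases hb : q b = true
      · simpa [List.filter_cons, hb, List.countP_cons] using ih p a hp hq
      · simpa [List.filter_cons, hb, List.countP_cons] using ih p a hp hq

lemma rank_eq (n : ℕ) (f : Fin n → ℕ) (q : ℕ → Bool) (p : Fin n) :
    (Finset.univ.filter (fun j : Fin n => (j : ℕ) < (p : ℕ) ∧ q (f j) = true)).card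
      = ((List.ofFn f).take p).countP q := by
  have h : (p : ℕ) ≤ n := p.2.le
  rw [← Fin.ofFn_take_eq_take_ofFn h, List.ofFn_eq_map, List.countP_map,
    List.countP_eq_length_filter]
  rw [show (Finset.univ.filter (fun j : Fin n => (j : ℕ) < (p : ℕ) ∧ q (f j) = true)).card
      = (Finset.univ.filter (fun j : Fin (p : ℕ) => q (f (Fin.castLE h j)) = true)).card from ?_]
  · rw [Fin.univ_def]
    simp only [Finset.filter, Finset.card, Multiset.filter_coe, Multiset.coe_card]
    congr 1
    apply List.filter_congr
    intro x _
    simp [Fin.take]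
  · refine Finset.card_bij (fun j hj => ⟨(j : ℕ), (Finset.mem_filter.1 hj).2.1⟩) ?_ ?_ ?_
    · intro a ha
      simp only [Finset.mem_filter, Finset.mem_univ, true_and] at ha ⊢
      have : Fin.castLE h (⟨(a : ℕ), ha.1⟩ : Fin (p : ℕ)) = a := rfl
      rw [this]; exact ha.2
    · intro a _ b _ hab
      have := congrArg Fin.val hab
      exact Fin.val_injective this
    · intro b hb
      simp only [Finset.mem_filter, Finset.mem_univ, true_and] at hb
      refine ⟨Fin.castLE h b, ?_, rfl⟩
      exact Finset.mem_filter.2 ⟨Finset.mem_univ _, b.2, hb⟩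

/-- Wavelet tree access correctness at the root level: following the bit of the
root bitmap and a rank query recovers the symbol from the child subsequence. -/
theorem stmt9 (n l : ℕ) (hl : 1 ≤ l) (S : Fin n → Fin (2 ^ l)) (p : Fin n) :
    let B : Fin n → Bool := fun j => Nat.testBit (S j) (l - 1)
    let T : List ℕ := List.ofFn fun j => (S j : ℕ)
    let S0 : List ℕ := (T.filter fun s => !Nat.testBit s (l - 1)).map fun s => s % 2 ^ (l - 1)
    let S1 : List ℕ := (T.filter fun s => Nat.testBit s (l - 1)).map fun s => s % 2 ^ (l - 1)
    let rank : Bool → ℕ → ℕ := fun c q =>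
      (Finset.univ.filter (fun j : Fin n => (j : ℕ) < q ∧ B j = c)).card
    (B p = false → S0[rank false p]? = some (S p : ℕ)) ∧
    (B p = true → ∃ x, S1[rank true p]? = some x ∧ (S p : ℕ) = 2 ^ (l - 1) + x) := by
  intro B T S0 S1 rank
  have hT : T[(p : ℕ)]? = some ((S p : ℕ)) := by
    simp [T, List.getElem?_ofFn, p.2]
  have hpos : 0 < 2 ^ (l - 1) := Nat.pow_pos (by norm_num)
  have hlt2 : ((S p : ℕ)) < 2 ^ (l - 1) * 2 := by
    have : 2 ^ l = 2 ^ (l - 1) * 2 := by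
      rw [← pow_succ]; congr 1; omega
    rw [← this]; exact (S p).2
  have hdivlt : (S p : ℕ) / 2 ^ (l - 1) < 2 := Nat.div_lt_of_lt_mul hlt2
  constructor
  · intro hB
    have hBf : Nat.testBit ((S p : ℕ)) (l - 1) = false := by simpa [B] using hB
    have hq : (!Nat.testBit ((S p : ℕ)) (l - 1)) = true := by simp [hBf]
    have hkey := key_filter (fun s => !Nat.testBit s (l - 1)) T p _ hT hq
    have hrank : rank false p = (T.take p).countP (fun s => !Nat.testBit s (l - 1)) := by
      have h := rank_eq n (fun j => (S j : ℕ)) (fun s => !Nat.testBit s (l - 1)) p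
      simp only [rank, B, T]
      rw [← h]
      congr 1; ext j; simp
    have hsmall : (S p : ℕ) < 2 ^ (l - 1) := by
      by_contra hc
      push_neg at hc
      have hd : (S p : ℕ) / 2 ^ (l - 1) = 1 := by
        have h1 : 1 ≤ (S p : ℕ) / 2 ^ (l - 1) := (Nat.one_le_div_iff hpos).2 hc
        generalize (S p : ℕ) / 2 ^ (l - 1) = k at h1 hdivlt ⊢
        omega
      rw [Nat.testBit_eq_decide_div_mod_eq, hd] at hBf
      simp at hBf
    rw [hrank]
    simp only [S0, List.getElem?_map, hkey, Option.map_some]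
    rw [Nat.mod_eq_of_lt hsmall]
  · intro hB
    have hq : Nat.testBit ((S p : ℕ)) (l - 1) = true := by simpa [B] using hB
    have hkey := key_filter (fun s => Nat.testBit s (l - 1)) T p _ hT hq
    have hrank : rank true p = (T.take p).countP (fun s => Nat.testBit s (l - 1)) := by
      have h := rank_eq n (fun j => (S j : ℕ)) (fun s => Nat.testBit s (l - 1)) p
      simp only [rank, B, T]
      rw [← h]
    refine ⟨(S p : ℕ) % 2 ^ (l - 1), ?_, ?_⟩
    · rw [hrank]
      simp only [S1, List.getElem?_map, hkey, Option.map_some]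
    · have hd : (S p : ℕ) / 2 ^ (l - 1) = 1 := by
        rw [Nat.testBit_eq_decide_div_mod_eq] at hq
        simp only [decide_eq_true_eq] at hq
        generalize (S p : ℕ) / 2 ^ (l - 1) = k at hq hdivlt ⊢
        omega
      have hm := Nat.div_add_mod ((S p : ℕ)) (2 ^ (l - 1))
      rw [hd, mul_one] at hm
      omega
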